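/- Let f : ℝ → ℝ be differentiable. If the limit of f(s) as s → ∞ exists (is finite) and the derivative f' is uniformly continuous on ℝ, then f'(s) → 0 as s → ∞. -/
import Mathlib


open Filter Topology

/-- Barbalat's lemma: If `f : ℝ → ℝ` is differentiable, `f` has a
finite limit at `+∞`, and `f'` is uniformly continuous, then `f'(s) → 0` as
`s → ∞`. -/
theorem barbalat_lemma
    (f : ℝ → ℝ) (hf : Differentiable ℝ f)
    (L : ℝ) (hL : Tendsto f atTop (𝓝 L))
    (huc : UniformContinuous (deriv f)) :
    Tendsto (deriv f) atTop (𝓝 0) := by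
  have hcont : Continuous (deriv f) := huc.continuous
  rw [Metric.tendsto_atTop]
  intro ε hε
  by_contra h
  push_neg at h
  obtain ⟨δ, hδ, hδε⟩ := Metric.uniformContinuous_iff.mp huc (ε / 2) (by positivity)
  set d := δ / 2 with hd
  have hd0 : 0 < d := by positivity
  have htends : Tendsto (fun s => f (s + d) - f s) atTop (𝓝 0) := by
    have := (hL.comp (tendsto_atTop_add_const_right atTop d tendsto_id)).sub hL
    simpa using this
  have hev : ∀ᶠ s in atTop, |f (s + d) - f s| < ε * d / 2 := by
    have := (Metric.tendsto_nhds.mp htends) (ε * d / 2) (by positivity)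
    simpa [Real.dist_eq] using this
  rw [eventually_atTop] at hev
  obtain ⟨N, hN⟩ := hev
  obtain ⟨n, hn, hfn⟩ := h N
  have h3 : ε ≤ |deriv f n| := by simpa [Real.dist_eq] using hfn
  have hint : (∫ u in n..(n + d), deriv f u) = f (n + d) - f n :=
    intervalIntegral.integral_deriv_eq_sub (fun x _ => hf x)
      (hcont.intervalIntegrable _ _)
  have key : (∫ u in n..(n + d), (deriv f u - deriv f n))
      = (f (n + d) - f n) - deriv f n * d := by
    rw [intervalIntegral.integral_sub (hcont.intervalIntegrable _ _)
      intervalIntegrable_const, hint, intervalIntegral.integral_const, smul_eq_mul]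
    ring
  have hb : ‖∫ u in n..(n + d), (deriv f u - deriv f n)‖ ≤ ε / 2 * |(n + d) - n| := by
    apply intervalIntegral.norm_integral_le_of_norm_le_const
    intro x hx
    rw [Set.uIoc_of_le (by linarith)] at hx
    have hx' : dist x n < δ := by
      rw [Real.dist_eq, abs_lt]
      constructor <;> [linarith [hx.1]; nlinarith [hx.2, hδ]]
    rw [Real.norm_eq_abs, ← Real.dist_eq]
    exact (hδε hx').le
  have h1 : |f (n + d) - f n| < ε * d / 2 := hN n hn
  have h2 : |(f (n + d) - f n) - deriv f n * d| ≤ ε / 2 * d := by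
    have habs : |(n + d) - n| = d := by
      rw [show (n + d) - n = d by ring, abs_of_pos hd0]
    rw [← key]
    calc ‖∫ u in n..(n + d), (deriv f u - deriv f n)‖ ≤ ε / 2 * |(n + d) - n| := hb
      _ = ε / 2 * d := by rw [habs]
  -- combine: |deriv f n * d| < ε * d
  have h4 : |deriv f n * d| < ε * d := by
    rcases abs_cases (deriv f n * d) with ⟨he, _⟩ | ⟨he, _⟩ <;>
      rcases abs_lt.mp h1 with ⟨hl1, hl2⟩ <;>
      rcases abs_le.mp h2 with ⟨hl3, hl4⟩ <;> rw [he] <;> linarith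
  have h5 : ε * d ≤ |deriv f n * d| := by
    rw [abs_mul, abs_of_pos hd0]
    exact mul_le_mul_of_nonneg_right h3 hd0.le
  linarith
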